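/- Let K be a field, q ∈ K not a root of unity, c ∈ K with c ≠ 0, and let f ∈ K[[z]] be a formal power series with f(0) = c². Then there exists a unique formal power series Y ∈ K[[z]] with constant term Y(0) = c such that Y(zq)·Y(zq^{−1}) = f(z) in K[[z]]. -/

import Mathlib

open PowerSeries Finset

noncomputable def ycAux {K : Type*} [Field K] (q c : K) (f : PowerSeries K) : ℕ → K
  | 0 => c
  | n+1 => (PowerSeries.coeff (n+1) f -
      ∑ k ∈ (Finset.range n).attach,
        q ^ ((k:ℕ)+1) * ycAux q c f ((k:ℕ)+1) * (q⁻¹ ^ (n-(k:ℕ)) * ycAux q c f (n-(k:ℕ)))) /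
      (c * (q ^ (n+1) + q⁻¹ ^ (n+1)))
  decreasing_by all_goals (have := k.2; simp only [Finset.mem_range] at this; omega)

lemma ycAux_zero {K : Type*} [Field K] (q c : K) (f : PowerSeries K) : ycAux q c f 0 = c := by
  simp [ycAux]

lemma ycAux_succ {K : Type*} [Field K] (q c : K) (f : PowerSeries K) (n : ℕ) :
    ycAux q c f (n+1) = (PowerSeries.coeff (n+1) f -
      ∑ k ∈ Finset.range n,
        q ^ (k+1) * ycAux q c f (k+1) * (q⁻¹ ^ (n-k) * ycAux q c f (n-k))) /
      (c * (q ^ (n+1) + q⁻¹ ^ (n+1))) := by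
  rw [ycAux, Finset.sum_attach (Finset.range n)
    (fun k => q ^ (k+1) * ycAux q c f (k+1) * (q⁻¹ ^ (n-k) * ycAux q c f (n-k)))]

lemma coeff_resc_mul {K : Type*} [Field K] (q : K) (Y : PowerSeries K) (n : ℕ) :
    PowerSeries.coeff n (PowerSeries.rescale q Y * PowerSeries.rescale q⁻¹ Y) =
    ∑ k ∈ range (n+1), q^k * PowerSeries.coeff k Y *
      (q⁻¹^(n-k) * PowerSeries.coeff (n-k) Y) := by
  rw [PowerSeries.coeff_mul, Finset.Nat.sum_antidiagonal_eq_sum_range_succ_mk]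
  simp [PowerSeries.coeff_rescale]

lemma coeff_resc_mul_succ {K : Type*} [Field K] (q : K) (Y : PowerSeries K) (n : ℕ) :
    PowerSeries.coeff (n+1) (PowerSeries.rescale q Y * PowerSeries.rescale q⁻¹ Y) =
    PowerSeries.coeff (n+1) Y * PowerSeries.coeff 0 Y * (q^(n+1) + q⁻¹^(n+1)) +
    ∑ k ∈ range n, q^(k+1) * PowerSeries.coeff (k+1) Y *
      (q⁻¹^(n-k) * PowerSeries.coeff (n-k) Y) := by
  rw [coeff_resc_mul, Finset.sum_range_succ, Finset.sum_range_succ']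
  simp only [Nat.succ_sub_succ, Nat.sub_self, Nat.sub_zero, pow_zero, one_mul, mul_one]
  ring

/-- let `K` be a field, `q ∈ K` nonzero and not a root of unity, `c ≠ 0`,
and `f ∈ K[[z]]` with constant term `c²`.  Then there is a unique power series
`Y ∈ K[[z]]` with constant term `c` such that `Y(zq)·Y(zq^{-1}) = f(z)`. -/
theorem stmt_9 {K : Type*} [Field K] (q : K) (hq : q ≠ 0)
    (hroot : ∀ n : ℕ, n ≠ 0 → q ^ n ≠ 1)
    (c : K) (hc : c ≠ 0) (f : PowerSeries K)
    (hf : PowerSeries.constantCoeff f = c ^ 2) :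
    ∃! Y : PowerSeries K, PowerSeries.constantCoeff Y = c ∧
      PowerSeries.rescale q Y * PowerSeries.rescale q⁻¹ Y = f := by
  have hd : ∀ n : ℕ, c * (q ^ (n+1) + q⁻¹ ^ (n+1)) ≠ 0 := by
    intro n
    refine mul_ne_zero hc fun h0 => ?_
    have h1 : q ^ (n+1) * q ^ (n+1) = -1 := by
      have := congrArg (· * q ^ (n+1)) h0
      field_simp at this
      have hh : q⁻¹ ^ (n+1) * q ^ (n+1) = 1 := by rw [← mul_pow, inv_mul_cancel₀ hq, one_pow]
      linear_combination q ^ (n+1) * h0 - hh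
    have : q ^ (4*(n+1)) = 1 := by
      have : (q ^ (n+1) * q ^ (n+1)) * (q ^ (n+1) * q ^ (n+1)) = 1 := by
        rw [h1]; ring
      calc q ^ (4*(n+1)) = (q ^ (n+1) * q ^ (n+1)) * (q ^ (n+1) * q ^ (n+1)) := by ring
        _ = 1 := this
    exact hroot (4*(n+1)) (by omega) this
  -- characterization: any Y satisfying both conditions has coefficients ycAux
  have huniq : ∀ Y : PowerSeries K, PowerSeries.constantCoeff Y = c →
      PowerSeries.rescale q Y * PowerSeries.rescale q⁻¹ Y = f →
      ∀ n, PowerSeries.coeff n Y = ycAux q c f n := by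
    intro Y h0 heq n
    induction n using Nat.strong_induction_on with
    | _ n ih =>
      match n with
      | 0 => simpa [ycAux_zero, ← PowerSeries.coeff_zero_eq_constantCoeff] using h0
      | n+1 =>
        have hcoe := congrArg (PowerSeries.coeff (n+1)) heq
        rw [coeff_resc_mul_succ] at hcoe
        rw [PowerSeries.coeff_zero_eq_constantCoeff, h0] at hcoe
        have hS : ∑ k ∈ range n, q^(k+1) * PowerSeries.coeff (k+1) Y *
            (q⁻¹^(n-k) * PowerSeries.coeff (n-k) Y) =
            ∑ k ∈ range n, q^(k+1) * ycAux q c f (k+1) * (q⁻¹^(n-k) * ycAux q c f (n-k)) := by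
          refine Finset.sum_congr rfl fun k hk => ?_
          rw [Finset.mem_range] at hk
          rw [ih (k+1) (by omega), ih (n-k) (by omega)]
        rw [hS] at hcoe
        rw [ycAux_succ, eq_div_iff (hd n)]
        linear_combination hcoe
  refine ⟨PowerSeries.mk (ycAux q c f), ⟨?_, ?_⟩, ?_⟩
  · simp [ycAux_zero]
  · ext n
    match n with
    | 0 =>
      rw [coeff_resc_mul]
      have h0f : PowerSeries.coeff 0 f = c^2 := by
        rw [PowerSeries.coeff_zero_eq_constantCoeff, hf]
      simp [ycAux_zero, h0f, sq]
    | n+1 =>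
      rw [coeff_resc_mul_succ]
      simp only [PowerSeries.coeff_mk, PowerSeries.coeff_zero_eq_constantCoeff,
        PowerSeries.constantCoeff_mk, ycAux_zero]
      rw [ycAux_succ, div_mul_eq_mul_div, div_mul_eq_mul_div,
        div_add' _ _ _ (hd n), div_eq_iff (hd n)]
      ring
  · intro Y ⟨h0, heq⟩
    ext n
    rw [huniq Y h0 heq n, PowerSeries.coeff_mk]
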